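/- Correct selection at every GARD step with inlier and outlier noise: let Q ∈ ℝ^{n×m} have orthonormal columns (QᵀQ = Iₘ), let u₀ ∈ ℝⁿ be s-sparse with support S, let η ∈ ℝⁿ with ‖η‖₂ ≤ ε₀, and let δ ∈ [0,1] satisfy the principal-angle bound for sparsity level s with δ < √2/2 and δ² < (min{|u₀ᵢ| : i ∈ S} − (2+√6) ε₀) / (2 ‖u₀‖₂). Then for every nonempty S_k ⊊ S (with k = |S_k|), the matrix M_k = I_k − I_{S_k}ᵀQQᵀI_{S_k} is invertible and the residual r = v_k + η_k − QQᵀ v_k − QQᵀ η_k, where v_k = F_{S∖S_k}(u₀) + I_{S_k} M_k⁻¹ I_{S_k}ᵀ Q Qᵀ F_{S∖S_k}(u₀) and η_k = F_{J∖S_k}(η) + I_{S_k} M_k⁻¹ I_{S_k}ᵀ Q Qᵀ F_{J∖S_k}(η) with J = {1,…,n}, satisfies |rᵢ| > |rⱼ| for every i ∈ S∖S_k and every j ∈ Sᶜ; hence GARD recovers the support of the sparse outlier vector u₀ exactly. -/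
import Mathlib


open Matrix

/-- Euclidean (ℓ₂) norm of a finitely-indexed real vector. -/
noncomputable def norm2 {ι : Type*} [Fintype ι] (v : ι → ℝ) : ℝ :=
  Real.sqrt (∑ i, v i ^ 2)

/-- A vector of `ℝⁿ` is `s`-sparse if it has at most `s` nonzero entries. -/
def Sparse {n : ℕ} (s : ℕ) (v : Fin n → ℝ) : Prop :=
  ∃ T : Finset (Fin n), T.card ≤ s ∧ ∀ i ∉ T, v i = 0

/-- `δ` satisfies the principal-angle bound for `Q` at sparsity level `s`:
`|⟨Qw, v⟩| ≤ δ ‖Qw‖₂ ‖v‖₂` for every `w` and every `s`-sparse `v`. -/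
def PABound {n m : ℕ} (Q : Matrix (Fin n) (Fin m) ℝ) (s : ℕ) (δ : ℝ) : Prop :=
  ∀ (w : Fin m → ℝ) (v : Fin n → ℝ), Sparse s v →
    |Q.mulVec w ⬝ᵥ v| ≤ δ * norm2 (Q.mulVec w) * norm2 v

/-- The `n × |S|` matrix `I_S` whose columns are the standard basis vectors `e_j`, `j ∈ S`. -/
def colSel {n : ℕ} (S : Finset (Fin n)) : Matrix (Fin n) {i // i ∈ S} ℝ :=
  Matrix.of fun i j => if i = (j : Fin n) then 1 else 0

/-- `F_S(a) = I_S I_Sᵀ a`: the vector agreeing with `a` on `S` and zero elsewhere. -/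
def restrictVec {n : ℕ} (S : Finset (Fin n)) (a : Fin n → ℝ) : Fin n → ℝ :=
  fun i => if i ∈ S then a i else 0

section aux
variable {ι : Type*} [Fintype ι]

lemma norm2_nonneg (v : ι → ℝ) : 0 ≤ norm2 v := Real.sqrt_nonneg _

lemma norm2_sq (v : ι → ℝ) : norm2 v ^ 2 = ∑ i, v i ^ 2 :=
  Real.sq_sqrt (Finset.sum_nonneg fun _ _ => sq_nonneg _)

lemma norm2_sq_dot (v : ι → ℝ) : norm2 v ^ 2 = v ⬝ᵥ v := by
  rw [norm2_sq]
  simp [dotProduct, sq]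

lemma le_on_sq {a b : ℝ} (ha : 0 ≤ a) (hb : 0 ≤ b) (h : a ^ 2 ≤ b ^ 2) : a ≤ b := by
  nlinarith

lemma div_trick {p c : ℝ} (hp : 0 ≤ p) (hc : 0 ≤ c) (h : p ^ 2 ≤ c * p) : p ≤ c := by
  nlinarith

lemma abs_le_norm2 (v : ι → ℝ) (i : ι) : |v i| ≤ norm2 v := by
  apply le_on_sq (abs_nonneg _) (norm2_nonneg v)
  rw [norm2_sq, sq_abs]
  exact Finset.single_le_sum (fun j _ => sq_nonneg (v j)) (Finset.mem_univ i)

lemma norm2_mono (v w : ι → ℝ) (h : ∀ i, v i ^ 2 ≤ w i ^ 2) : norm2 v ≤ norm2 w :=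
  Real.sqrt_le_sqrt (Finset.sum_le_sum fun i _ => h i)

lemma abs_dot_le (v w : ι → ℝ) : |v ⬝ᵥ w| ≤ norm2 v * norm2 w := by
  apply le_on_sq (abs_nonneg _) (mul_nonneg (norm2_nonneg v) (norm2_nonneg w))
  rw [sq_abs, mul_pow, norm2_sq, norm2_sq]
  simpa [dotProduct] using Finset.sum_mul_sq_le_sq_mul_sq Finset.univ v w

lemma dot_expand (v w : ι → ℝ) :
    ∑ i, (v i + w i) ^ 2 = (∑ i, v i ^ 2) + 2 * (v ⬝ᵥ w) + ∑ i, w i ^ 2 := by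
  have h : ∀ i ∈ Finset.univ, (v i + w i) ^ 2 = v i ^ 2 + 2 * (v i * w i) + w i ^ 2 :=
    fun i _ => by ring
  rw [Finset.sum_congr rfl h, Finset.sum_add_distrib, Finset.sum_add_distrib,
    ← Finset.mul_sum]
  rfl

lemma norm2_add_le (v w : ι → ℝ) : norm2 (v + w) ≤ norm2 v + norm2 w := by
  apply le_on_sq (norm2_nonneg _) (add_nonneg (norm2_nonneg v) (norm2_nonneg w))
  have h1 : v ⬝ᵥ w ≤ norm2 v * norm2 w := le_trans (le_abs_self _) (abs_dot_le v w)
  have h2 : norm2 (v + w) ^ 2 = (∑ i, v i ^ 2) + 2 * (v ⬝ᵥ w) + ∑ i, w i ^ 2 := by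
    rw [norm2_sq]
    simp only [Pi.add_apply]
    exact dot_expand v w
  nlinarith [norm2_sq v, norm2_sq w]

lemma norm2_eq_zero {v : ι → ℝ} (h : norm2 v = 0) : v = 0 := by
  have h0 : ∑ j, v j ^ 2 = 0 := by
    have h1 := norm2_sq v
    rw [h] at h1
    simpa using h1.symm
  funext i
  have h2 := (Finset.sum_eq_zero_iff_of_nonneg (fun j _ => sq_nonneg (v j))).mp h0 i
    (Finset.mem_univ i)
  have : v i = 0 := by nlinarith
  simpa using this

lemma norm2_sq_add_disj (v w : ι → ℝ) (h : ∀ i, v i = 0 ∨ w i = 0) :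
    norm2 (v + w) ^ 2 = norm2 v ^ 2 + norm2 w ^ 2 := by
  have hd : v ⬝ᵥ w = 0 := Finset.sum_eq_zero fun i _ => by rcases h i with h | h <;> simp [h]
  have h2 : norm2 (v + w) ^ 2 = (∑ i, v i ^ 2) + 2 * (v ⬝ᵥ w) + ∑ i, w i ^ 2 := by
    rw [norm2_sq]
    simp only [Pi.add_apply]
    exact dot_expand v w
  rw [h2, hd, norm2_sq, norm2_sq]
  ring

end aux

section sel
variable {n : ℕ} {Sk : Finset (Fin n)}

lemma colSelT_apply (y : Fin n → ℝ) (j : {i // i ∈ Sk}) : ((colSel Sk)ᵀ *ᵥ y) j = y j := by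
  simp [Matrix.mulVec, dotProduct, colSel, Matrix.transpose_apply, ite_mul]

lemma colSel_apply (β : {i // i ∈ Sk} → ℝ) (i : Fin n) :
    ((colSel Sk) *ᵥ β) i = if h : i ∈ Sk then β ⟨i, h⟩ else 0 := by
  have hrfl : ((colSel Sk) *ᵥ β) i = ∑ j : {x // x ∈ Sk}, (if i = (j : Fin n) then 1 else 0) * β j :=
    rfl
  by_cases h : i ∈ Sk
  · rw [dif_pos h, hrfl, Finset.sum_eq_single (⟨i, h⟩ : {x // x ∈ Sk})]
    · simp
    · intro j _ hj
      have hne : ¬ i = (j : Fin n) := by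
        rintro rfl
        exact hj (Subtype.coe_eta j h).symm
      simp [hne]
    · intro hmem
      exact absurd (Finset.mem_univ _) hmem
  · rw [dif_neg h, hrfl]
    apply Finset.sum_eq_zero
    intro j _
    have hne : ¬ i = (j : Fin n) := fun he => h (he ▸ j.2)
    simp [hne]

lemma sum_sq_eq_subtype (T : Finset (Fin n)) (f : Fin n → ℝ) (h0 : ∀ i ∉ T, f i = 0) :
    ∑ i, f i ^ 2 = ∑ j : {i // i ∈ T}, f j ^ 2 := by
  rw [Finset.sum_coe_sort T (fun i => f i ^ 2)]
  exact (Finset.sum_subset (Finset.subset_univ T) (fun i _ hi => by rw [h0 i hi]; ring)).symm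

lemma norm2_colSel (β : {i // i ∈ Sk} → ℝ) : norm2 ((colSel Sk) *ᵥ β) = norm2 β := by
  unfold norm2
  congr 1
  rw [sum_sq_eq_subtype Sk _ (fun i hi => by rw [colSel_apply]; exact dif_neg hi)]
  apply Finset.sum_congr rfl
  intro j _
  rw [colSel_apply, dif_pos j.2]

lemma norm2_colSelT (y : Fin n → ℝ) :
    norm2 ((colSel Sk)ᵀ *ᵥ y) = norm2 (restrictVec Sk y) := by
  unfold norm2
  congr 1
  rw [sum_sq_eq_subtype Sk (restrictVec Sk y) (fun i hi => if_neg hi)]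
  apply Finset.sum_congr rfl
  intro j _
  rw [colSelT_apply, restrictVec, if_pos j.2]

lemma norm2_restrict_le (T : Finset (Fin n)) (a : Fin n → ℝ) :
    norm2 (restrictVec T a) ≤ norm2 a := by
  apply norm2_mono
  intro i
  unfold restrictVec
  split
  · exact le_refl _
  · simpa using sq_nonneg (a i)
end sel

section qlem
variable {n m s : ℕ} {Q : Matrix (Fin n) (Fin m) ℝ} {δ : ℝ}

lemma vecMul_Q (hQ : Qᵀ * Q = 1) (y : Fin m → ℝ) : (Q *ᵥ y) ᵥ* Q = y := by
  rw [← Matrix.mulVec_transpose, Matrix.mulVec_mulVec, hQ, Matrix.one_mulVec]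

lemma Qdot (hQ : Qᵀ * Q = 1) (y : Fin m → ℝ) : (Q *ᵥ y) ⬝ᵥ (Q *ᵥ y) = y ⬝ᵥ y := by
  rw [Matrix.dotProduct_mulVec, vecMul_Q hQ]

lemma dot_p (v x : Fin n → ℝ) :
    v ⬝ᵥ (Q *ᵥ (Qᵀ *ᵥ x)) = (Qᵀ *ᵥ v) ⬝ᵥ (Qᵀ *ᵥ x) := by
  rw [Matrix.dotProduct_mulVec, ← Matrix.mulVec_transpose]

lemma norm2_p_sq (hQ : Qᵀ * Q = 1) (x : Fin n → ℝ) :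
    norm2 (Q *ᵥ (Qᵀ *ᵥ x)) ^ 2 = x ⬝ᵥ (Q *ᵥ (Qᵀ *ᵥ x)) := by
  rw [norm2_sq_dot, Qdot hQ, dot_p]

lemma key0 (hQ : Qᵀ * Q = 1) (x : Fin n → ℝ) :
    norm2 (Q *ᵥ (Qᵀ *ᵥ x)) ≤ norm2 x := by
  set p := Q *ᵥ (Qᵀ *ᵥ x) with hp
  have h1 : norm2 p ^ 2 = x ⬝ᵥ p := norm2_p_sq hQ x
  have h2 : x ⬝ᵥ p ≤ norm2 x * norm2 p := le_trans (le_abs_self _) (abs_dot_le _ _)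
  exact div_trick (norm2_nonneg p) (norm2_nonneg x) (by nlinarith)

lemma key1 (hQ : Qᵀ * Q = 1) (hδ0 : 0 ≤ δ) (hPA : PABound Q s δ) {v : Fin n → ℝ}
    (hv : Sparse s v) : norm2 (Q *ᵥ (Qᵀ *ᵥ v)) ≤ δ * norm2 v := by
  set p := Q *ᵥ (Qᵀ *ᵥ v) with hp
  have h1 : norm2 p ^ 2 = v ⬝ᵥ p := norm2_p_sq hQ v
  have h2 : |p ⬝ᵥ v| ≤ δ * norm2 p * norm2 v := hPA (Qᵀ *ᵥ v) v hv
  have h3 : v ⬝ᵥ p ≤ δ * norm2 p * norm2 v := by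
    rw [dotProduct_comm]
    exact le_trans (le_abs_self _) h2
  exact div_trick (norm2_nonneg p) (mul_nonneg hδ0 (norm2_nonneg v)) (by nlinarith)

lemma sparse_restrict {s : ℕ} (T : Finset (Fin n)) (hT : T.card ≤ s) (a : Fin n → ℝ) :
    Sparse s (restrictVec T a) := ⟨T, hT, fun i hi => if_neg hi⟩

lemma key2 (hQ : Qᵀ * Q = 1) (hδ0 : 0 ≤ δ) (hPA : PABound Q s δ) (x : Fin n → ℝ)
    (T : Finset (Fin n)) (hT : T.card ≤ s) :
    norm2 (restrictVec T (Q *ᵥ (Qᵀ *ᵥ x))) ≤ δ * norm2 (Q *ᵥ (Qᵀ *ᵥ x)) := by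
  set p := Q *ᵥ (Qᵀ *ᵥ x) with hp
  set q := restrictVec T p with hq
  have h1 : norm2 q ^ 2 = p ⬝ᵥ q := by
    rw [norm2_sq_dot]
    apply Finset.sum_congr rfl
    intro i _
    show q i * q i = p i * q i
    rw [hq]
    unfold restrictVec
    split
    · rfl
    · ring
  have h2 : |p ⬝ᵥ q| ≤ δ * norm2 p * norm2 q := hPA (Qᵀ *ᵥ x) q (sparse_restrict T hT p)
  have h3 : p ⬝ᵥ q ≤ δ * norm2 p * norm2 q := le_trans (le_abs_self _) h2
  exact div_trick (norm2_nonneg q) (mul_nonneg hδ0 (norm2_nonneg p)) (by nlinarith)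

lemma key2' (hQ : Qᵀ * Q = 1) (hδ0 : 0 ≤ δ) (hPA : PABound Q s δ) (hs1 : 1 ≤ s)
    (x : Fin n → ℝ) (t : Fin n) :
    |(Q *ᵥ (Qᵀ *ᵥ x)) t| ≤ δ * norm2 (Q *ᵥ (Qᵀ *ᵥ x)) := by
  set p := Q *ᵥ (Qᵀ *ᵥ x) with hp
  have h1 : |p t| = |restrictVec {t} p t| := by
    rw [restrictVec]
    simp
  calc |p t| = |restrictVec {t} p t| := h1
    _ ≤ norm2 (restrictVec {t} p) := abs_le_norm2 _ t
    _ ≤ δ * norm2 p := key2 hQ hδ0 hPA x {t} (by simpa using hs1)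

end qlem

set_option maxHeartbeats 1600000 in
/-- Correct selection at every GARD step with inlier and outlier noise: if `δ < √2/2` and
`δ² < (min_{i ∈ S} |u₀ᵢ| − (2 + √6) ε₀) / (2‖u₀‖₂)`, then for every nonempty `S_k ⊊ S`
the matrix `M_k` is invertible and the residual
`r = v_k + η_k − QQᵀ v_k − QQᵀ η_k` satisfies `|rᵢ| > |rⱼ|` for all `i ∈ S∖S_k`, `j ∈ Sᶜ`;
hence GARD recovers the support of the sparse outlier vector exactly. -/
theorem stmt18 {n m s : ℕ} (Q : Matrix (Fin n) (Fin m) ℝ) (hQ : Qᵀ * Q = 1)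
    (δ : ℝ) (hδ0 : 0 ≤ δ) (hδ1 : δ ≤ 1) (hPA : PABound Q s δ)
    (u₀ : Fin n → ℝ) (S : Finset (Fin n)) (hsupp : ∀ i, i ∈ S ↔ u₀ i ≠ 0)
    (hSne : S.Nonempty) (hcard : S.card ≤ s)
    (η : Fin n → ℝ) (ε₀ : ℝ) (hη : norm2 η ≤ ε₀)
    (hδhalf : δ < Real.sqrt 2 / 2)
    (hbound : δ ^ 2 <
      (S.inf' hSne (fun i => |u₀ i|) - (2 + Real.sqrt 6) * ε₀) / (2 * norm2 u₀))
    (Sk : Finset (Fin n)) (hSkne : Sk.Nonempty) (hSkS : Sk ⊂ S)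
    (Mk : Matrix {i // i ∈ Sk} {i // i ∈ Sk} ℝ)
    (hMk : Mk = 1 - (colSel Sk)ᵀ * Q * Qᵀ * colSel Sk)
    (vk : Fin n → ℝ)
    (hvk : vk = restrictVec (S \ Sk) u₀ +
      (colSel Sk).mulVec ((Mk⁻¹).mulVec
        ((colSel Sk)ᵀ.mulVec (Q.mulVec (Qᵀ.mulVec (restrictVec (S \ Sk) u₀))))))
    (ηk : Fin n → ℝ)
    (hηk : ηk = restrictVec (Finset.univ \ Sk) η +
      (colSel Sk).mulVec ((Mk⁻¹).mulVec
        ((colSel Sk)ᵀ.mulVec (Q.mulVec (Qᵀ.mulVec (restrictVec (Finset.univ \ Sk) η))))))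
    (r : Fin n → ℝ)
    (hr : r = vk + ηk - Q.mulVec (Qᵀ.mulVec vk) - Q.mulVec (Qᵀ.mulVec ηk)) :
    IsUnit Mk ∧ ∀ i ∈ S \ Sk, ∀ j ∉ S, |r j| < |r i| := by
  classical
  have hε0 : 0 ≤ ε₀ := le_trans (norm2_nonneg η) hη
  have h2sq : Real.sqrt 2 ^ 2 = 2 := Real.sq_sqrt (by norm_num)
  have h6sq : Real.sqrt 6 ^ 2 = 6 := Real.sq_sqrt (by norm_num)
  have h6nn : 0 ≤ Real.sqrt 6 := Real.sqrt_nonneg 6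
  have hδsq : δ ^ 2 < 1 / 2 := by nlinarith [Real.sqrt_nonneg 2]
  set μ := S.inf' hSne fun i => |u₀ i| with hμdef
  have hs1 : 1 ≤ s := le_trans hSne.card_pos hcard
  have hSkcard : Sk.card ≤ s := le_trans (Finset.card_le_card hSkS.subset) hcard
  have hNpos : 0 < norm2 u₀ := by
    obtain ⟨i₀, hi₀⟩ := hSne
    have h1 : 0 < |u₀ i₀| := abs_pos.mpr ((hsupp i₀).mp hi₀)
    linarith [abs_le_norm2 u₀ i₀]
  have hbound' : 2 * δ ^ 2 * norm2 u₀ < μ - (2 + Real.sqrt 6) * ε₀ := by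
    have h := (lt_div_iff₀ (by positivity)).mp hbound
    nlinarith
  set a := restrictVec (S \ Sk) u₀ with hadef
  set b := restrictVec (Finset.univ \ Sk) η with hbdef
  set B := (colSel Sk)ᵀ * Q * Qᵀ * colSel Sk with hBdef
  have hBop : ∀ β : {i // i ∈ Sk} → ℝ, norm2 (B *ᵥ β) ≤ δ ^ 2 * norm2 β := by
    intro β
    have h1 : B *ᵥ β = (colSel Sk)ᵀ *ᵥ (Q *ᵥ (Qᵀ *ᵥ ((colSel Sk) *ᵥ β))) := by
      rw [hBdef, ← Matrix.mulVec_mulVec, ← Matrix.mulVec_mulVec, ← Matrix.mulVec_mulVec]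
    have hsp : Sparse s ((colSel Sk) *ᵥ β) :=
      ⟨Sk, hSkcard, fun i hi => by rw [colSel_apply]; exact dif_neg hi⟩
    calc norm2 (B *ᵥ β) = norm2 (restrictVec Sk (Q *ᵥ (Qᵀ *ᵥ ((colSel Sk) *ᵥ β)))) := by
          rw [h1, norm2_colSelT]
      _ ≤ δ * norm2 (Q *ᵥ (Qᵀ *ᵥ ((colSel Sk) *ᵥ β))) := key2 hQ hδ0 hPA _ Sk hSkcard
      _ ≤ δ * (δ * norm2 ((colSel Sk) *ᵥ β)) :=
          mul_le_mul_of_nonneg_left (key1 hQ hδ0 hPA hsp) hδ0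
      _ = δ ^ 2 * norm2 β := by rw [norm2_colSel]; ring
  have hcontr : ∀ γ : {i // i ∈ Sk} → ℝ, Mk *ᵥ γ = 0 → γ = 0 := by
    intro γ hγ
    have h1 : Mk *ᵥ γ = γ - B *ᵥ γ := by rw [hMk, Matrix.sub_mulVec, Matrix.one_mulVec]
    rw [h1] at hγ
    have h2 : γ = B *ᵥ γ := sub_eq_zero.mp hγ
    have h3 : norm2 γ ≤ δ ^ 2 * norm2 γ := by
      calc norm2 γ = norm2 (B *ᵥ γ) := congrArg norm2 h2
        _ ≤ δ ^ 2 * norm2 γ := hBop γ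
    have h4 : norm2 γ = 0 := by nlinarith [norm2_nonneg γ]
    exact norm2_eq_zero h4
  have hMkU : IsUnit Mk := by
    apply Matrix.mulVec_injective_iff_isUnit.mp
    intro γ₁ γ₂ h
    have h0 : Mk *ᵥ (γ₁ - γ₂) = 0 := by rw [Matrix.mulVec_sub, h, sub_self]
    exact sub_eq_zero.mp (hcontr _ h0)
  refine ⟨hMkU, ?_⟩
  have hMdet : IsUnit Mk.det := (Matrix.isUnit_iff_isUnit_det Mk).mp hMkU
  have hMinv : ∀ x, norm2 ((Mk⁻¹) *ᵥ x) ≤ 2 * norm2 x := by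
    intro x
    have hx : Mk *ᵥ ((Mk⁻¹) *ᵥ x) = x := by
      rw [Matrix.mulVec_mulVec, Matrix.mul_nonsing_inv _ hMdet, Matrix.one_mulVec]
    set β := (Mk⁻¹) *ᵥ x with hβ
    have h1 : Mk *ᵥ β = β - B *ᵥ β := by rw [hMk, Matrix.sub_mulVec, Matrix.one_mulVec]
    have h2 : β = x + B *ᵥ β := by rw [← hx, h1]; abel
    have h3 := norm2_add_le x (B *ᵥ β)
    have h4 := hBop β
    have h5 : norm2 β ≤ norm2 x + norm2 (B *ᵥ β) := by
      calc norm2 β = norm2 (x + B *ᵥ β) := congrArg norm2 h2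
        _ ≤ norm2 x + norm2 (B *ᵥ β) := h3
    nlinarith [norm2_nonneg β, norm2_nonneg x]
  set βv := (Mk⁻¹) *ᵥ ((colSel Sk)ᵀ *ᵥ (Q *ᵥ (Qᵀ *ᵥ a))) with hβvdef
  set βb := (Mk⁻¹) *ᵥ ((colSel Sk)ᵀ *ᵥ (Q *ᵥ (Qᵀ *ᵥ b))) with hβbdef
  have hsp_a : Sparse s a :=
    sparse_restrict _ (le_trans (Finset.card_le_card Finset.sdiff_subset) hcard) u₀
  have hna : norm2 a ≤ norm2 u₀ := norm2_restrict_le _ _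
  have hβv_le : norm2 βv ≤ 2 * (δ * (δ * norm2 a)) := by
    calc norm2 βv ≤ 2 * norm2 ((colSel Sk)ᵀ *ᵥ (Q *ᵥ (Qᵀ *ᵥ a))) := hMinv _
      _ = 2 * norm2 (restrictVec Sk (Q *ᵥ (Qᵀ *ᵥ a))) := by rw [norm2_colSelT]
      _ ≤ 2 * (δ * norm2 (Q *ᵥ (Qᵀ *ᵥ a))) := by
          have := key2 hQ hδ0 hPA a Sk hSkcard; linarith
      _ ≤ 2 * (δ * (δ * norm2 a)) := by
          have := key1 hQ hδ0 hPA hsp_a; nlinarith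
  have hβv2 : norm2 βv ≤ 2 * δ ^ 2 * norm2 u₀ := by
    have hmul : δ ^ 2 * norm2 a ≤ δ ^ 2 * norm2 u₀ :=
      mul_le_mul_of_nonneg_left hna (sq_nonneg δ)
    nlinarith
  have hμle : ∀ i ∈ S, μ ≤ |u₀ i| := by
    intro i hi
    rw [hμdef]
    exact Finset.inf'_le _ hi
  have hμSk : μ ≤ norm2 (restrictVec Sk u₀) := by
    obtain ⟨k₀, hk₀⟩ := hSkne
    calc μ ≤ |u₀ k₀| := hμle k₀ (hSkS.subset hk₀)
      _ = |restrictVec Sk u₀ k₀| := by simp [restrictVec, hk₀]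
      _ ≤ norm2 (restrictVec Sk u₀) := abs_le_norm2 _ _
  have hu₀split : u₀ = a + restrictVec Sk u₀ := by
    funext i
    simp only [Pi.add_apply]
    by_cases hi : i ∈ Sk
    · have h1 : i ∉ S \ Sk := by simp [hi]
      simp [hadef, restrictVec, h1, hi]
    · by_cases hiS : i ∈ S
      · have h1 : i ∈ S \ Sk := Finset.mem_sdiff.mpr ⟨hiS, hi⟩
        simp [hadef, restrictVec, h1, hi]
      · have h0 : u₀ i = 0 := by
          by_contra hne; exact hiS ((hsupp i).mpr hne)
        have h1 : i ∉ S \ Sk := by simp [hiS]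
        simp [hadef, restrictVec, h1, hi, h0]
  have hNsq : norm2 u₀ ^ 2 = norm2 a ^ 2 + norm2 (restrictVec Sk u₀) ^ 2 := by
    conv_lhs => rw [hu₀split]
    apply norm2_sq_add_disj
    intro i
    by_cases hi : i ∈ Sk
    · left
      have h1 : i ∉ S \ Sk := by simp [hi]
      simp [hadef, restrictVec, h1]
    · right; simp [restrictVec, hi]
  have hvk_disj : ∀ i, a i = 0 ∨ ((colSel Sk) *ᵥ βv) i = 0 := by
    intro i
    by_cases hi : i ∈ Sk
    · left
      have h1 : i ∉ S \ Sk := by simp [hi]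
      simp [hadef, restrictVec, h1]
    · right; rw [colSel_apply]; exact dif_neg hi
  have hvksq : norm2 vk ^ 2 = norm2 a ^ 2 + norm2 βv ^ 2 := by
    rw [hvk, norm2_sq_add_disj _ _ hvk_disj, norm2_colSel]
  have hvkN : norm2 vk ≤ norm2 u₀ := by
    apply le_on_sq (norm2_nonneg _) (le_of_lt hNpos)
    have h3 : norm2 βv ≤ norm2 (restrictVec Sk u₀) := by
      have h4 : 2 * δ ^ 2 * norm2 u₀ ≤ μ := by nlinarith
      linarith
    nlinarith [norm2_nonneg βv, norm2_nonneg (restrictVec Sk u₀)]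
  have hnb : norm2 b ≤ ε₀ := le_trans (norm2_restrict_le _ _) hη
  have hβb_le : norm2 βb ≤ 2 * (δ * norm2 b) := by
    calc norm2 βb ≤ 2 * norm2 ((colSel Sk)ᵀ *ᵥ (Q *ᵥ (Qᵀ *ᵥ b))) := hMinv _
      _ = 2 * norm2 (restrictVec Sk (Q *ᵥ (Qᵀ *ᵥ b))) := by rw [norm2_colSelT]
      _ ≤ 2 * (δ * norm2 (Q *ᵥ (Qᵀ *ᵥ b))) := by
          have := key2 hQ hδ0 hPA b Sk hSkcard; linarith
      _ ≤ 2 * (δ * norm2 b) := by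
          have := key0 hQ b; nlinarith
  have hηk_disj : ∀ i, b i = 0 ∨ ((colSel Sk) *ᵥ βb) i = 0 := by
    intro i
    by_cases hi : i ∈ Sk
    · left
      have h1 : i ∉ Finset.univ \ Sk := by simp [hi]
      simp [hbdef, restrictVec, h1]
    · right; rw [colSel_apply]; exact dif_neg hi
  have hηksq : norm2 ηk ^ 2 = norm2 b ^ 2 + norm2 βb ^ 2 := by
    rw [hηk, norm2_sq_add_disj _ _ hηk_disj, norm2_colSel]
  have hηkN : norm2 ηk ^ 2 ≤ 3 * ε₀ ^ 2 := by
    have h1 : norm2 βb ^ 2 ≤ (2 * (δ * norm2 b)) ^ 2 :=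
      pow_le_pow_left₀ (norm2_nonneg βb) hβb_le 2
    have h2 : norm2 b ^ 2 ≤ ε₀ ^ 2 := pow_le_pow_left₀ (norm2_nonneg b) hnb 2
    nlinarith [sq_nonneg (norm2 b)]
  have hsp_vk : Sparse s vk := by
    refine ⟨S, hcard, fun i hi => ?_⟩
    have h1 : i ∉ Sk := fun hc => hi (hSkS.subset hc)
    have h2 : i ∉ S \ Sk := by simp [hi]
    rw [hvk]
    simp only [Pi.add_apply]
    rw [colSel_apply, dif_neg h1]
    simp [hadef, restrictVec, h2]
  have hPvk : ∀ t, |(Q *ᵥ (Qᵀ *ᵥ vk)) t| ≤ δ ^ 2 * norm2 u₀ := by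
    intro t
    have h1 := key2' hQ hδ0 hPA hs1 vk t
    have h2 := key1 hQ hδ0 hPA hsp_vk
    nlinarith [mul_le_mul_of_nonneg_left h2 hδ0, sq_nonneg δ]
  have hPηk : ∀ t, |(Q *ᵥ (Qᵀ *ᵥ ηk)) t| ≤ δ * norm2 ηk := by
    intro t
    have h1 := key2' hQ hδ0 hPA hs1 ηk t
    have h2 := key0 hQ ηk
    nlinarith [mul_le_mul_of_nonneg_left h2 hδ0]
  have hηkbd : 2 * (δ * norm2 ηk) ≤ Real.sqrt 6 * ε₀ := by
    apply le_on_sq (mul_nonneg (by norm_num) (mul_nonneg hδ0 (norm2_nonneg _)))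
      (mul_nonneg h6nn hε0)
    nlinarith [sq_nonneg (norm2 ηk), norm2_nonneg ηk]
  have hvk_t : ∀ t, t ∉ Sk → vk t = a t := by
    intro t ht
    rw [hvk]
    simp only [Pi.add_apply]
    rw [colSel_apply, dif_neg ht, add_zero]
  have hηk_t : ∀ t, t ∉ Sk → ηk t = η t := by
    intro t ht
    rw [hηk]
    simp only [Pi.add_apply]
    rw [colSel_apply, dif_neg ht, add_zero]
    simp [hbdef, restrictVec, ht]
  have hr_t : ∀ t, r t = vk t + ηk t - (Q *ᵥ (Qᵀ *ᵥ vk)) t - (Q *ᵥ (Qᵀ *ᵥ ηk)) t := by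
    intro t; rw [hr]; simp
  have hηpt : ∀ t, |η t| ≤ ε₀ := fun t => le_trans (abs_le_norm2 η t) hη
  intro i hiS j hjS
  have hi' := Finset.mem_sdiff.mp hiS
  have hjSk : j ∉ Sk := fun hc => hjS (hSkS.subset hc)
  have hai : a i = u₀ i := by simp [hadef, restrictVec, hiS]
  have haj : a j = 0 := by
    have h1 : j ∉ S \ Sk := by simp [hjS]
    simp [hadef, restrictVec, h1]
  have hw : ∀ t, |η t - (Q *ᵥ (Qᵀ *ᵥ vk)) t - (Q *ᵥ (Qᵀ *ᵥ ηk)) t| ≤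
      ε₀ + δ ^ 2 * norm2 u₀ + δ * norm2 ηk := by
    intro t
    have h1 : |η t - (Q *ᵥ (Qᵀ *ᵥ vk)) t - (Q *ᵥ (Qᵀ *ᵥ ηk)) t| ≤
        |η t - (Q *ᵥ (Qᵀ *ᵥ vk)) t| + |(Q *ᵥ (Qᵀ *ᵥ ηk)) t| := abs_sub _ _
    have h2 : |η t - (Q *ᵥ (Qᵀ *ᵥ vk)) t| ≤ |η t| + |(Q *ᵥ (Qᵀ *ᵥ vk)) t| := abs_sub _ _
    linarith [hηpt t, hPvk t, hPηk t]
  have hri : r i = u₀ i + (η i - (Q *ᵥ (Qᵀ *ᵥ vk)) i - (Q *ᵥ (Qᵀ *ᵥ ηk)) i) := by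
    rw [hr_t i, hvk_t i hi'.2, hηk_t i hi'.2, hai]; ring
  have hrj : r j = η j - (Q *ᵥ (Qᵀ *ᵥ vk)) j - (Q *ᵥ (Qᵀ *ᵥ ηk)) j := by
    rw [hr_t j, hvk_t j hjSk, hηk_t j hjSk, haj]; ring
  have h_lower : μ - (ε₀ + δ ^ 2 * norm2 u₀ + δ * norm2 ηk) ≤ |r i| := by
    have h1 : u₀ i = r i - (η i - (Q *ᵥ (Qᵀ *ᵥ vk)) i - (Q *ᵥ (Qᵀ *ᵥ ηk)) i) := by
      rw [hri]; ring
    have h2 : |u₀ i| ≤ |r i| + |η i - (Q *ᵥ (Qᵀ *ᵥ vk)) i - (Q *ᵥ (Qᵀ *ᵥ ηk)) i| := by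
      rw [h1]; exact abs_sub _ _
    linarith [hw i, hμle i hi'.1]
  have h_upper : |r j| ≤ ε₀ + δ ^ 2 * norm2 u₀ + δ * norm2 ηk := by
    rw [hrj]; exact hw j
  linarith [hbound', hηkbd]
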